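/- Let p be an odd prime, l ≥ 1, and suppose ψ_n(x) = x^n is ergodic on the sphere S_{p^{-l}}(1) with respect to the normalized Haar measure. Then ψ_n is not weakly mixing: the product system ψ_n × ψ_n on S_{p^{-l}}(1) × S_{p^{-l}}(1) is not ergodic, because F(x,y) = log x / log y is a non-constant measurable invariant function, satisfying F(x^n, y^n) = F(x,y). -/

import Mathlib

open MeasureTheory

/-- The p-adic logarithm, defined by its power series
`log(1+λ) = ∑_{k≥1} (-1)^{k+1} λ^k / k`. -/
noncomputable def plog {p : ℕ} [Fact p.Prime] (x : ℚ_[p]) : ℚ_[p] :=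
  ∑' k : ℕ, (-1) ^ k * (x - 1) ^ (k + 1) / (k + 1)



open Finset IsUltrametricDist

variable {p : ℕ} [Fact p.Prime]

lemma pow_sub_one_norm_le (x : ℤ_[p]) (i : ℕ) : ‖x ^ i - 1‖ ≤ ‖x - 1‖ := by
  calc ‖x ^ i - 1‖ = ‖(∑ t ∈ range i, x ^ t) * (x - 1)‖ := by rw [geom_sum_mul]
  _ = ‖∑ t ∈ range i, x ^ t‖ * ‖x - 1‖ := by rw [norm_mul]
  _ ≤ 1 * ‖x - 1‖ := by
      exact mul_le_mul_of_nonneg_right (PadicInt.norm_le_one _) (norm_nonneg _)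
  _ = ‖x - 1‖ := one_mul _

lemma norm_pow_sub_pow (x y : ℤ_[p]) (hx : ‖x - 1‖ < 1) (hy : ‖y - 1‖ < 1)
    (n : ℕ) (hn : ¬ (p : ℤ) ∣ (n : ℤ)) : ‖x ^ n - y ^ n‖ = ‖x - y‖ := by
  have key : x ^ n - y ^ n = (∑ i ∈ range n, x ^ i * y ^ (n - 1 - i)) * (x - y) :=
    (geom_sum₂_mul x y n).symm
  set S : ℤ_[p] := ∑ i ∈ range n, x ^ i * y ^ (n - 1 - i) with hS
  have hterm : ∀ i ∈ range n, ‖x ^ i * y ^ (n - 1 - i) - 1‖ < 1 := by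
    intro i _
    have : x ^ i * y ^ (n - 1 - i) - 1
        = (x ^ i - 1) * y ^ (n - 1 - i) + (y ^ (n - 1 - i) - 1) := by ring
    rw [this]
    refine lt_of_le_of_lt (norm_add_le_max _ _) (max_lt ?_ ?_)
    · rw [norm_mul]
      calc ‖x ^ i - 1‖ * ‖y ^ (n-1-i)‖ ≤ ‖x - 1‖ * 1 :=
            mul_le_mul (pow_sub_one_norm_le x i) (PadicInt.norm_le_one _)
              (norm_nonneg _) (norm_nonneg _)
      _ < 1 := by simpa using hx
    · exact lt_of_le_of_lt (pow_sub_one_norm_le y _) hy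
  have hSn : ‖S - (n : ℤ_[p])‖ < 1 := by
    have : S - (n : ℤ_[p]) = ∑ i ∈ range n, (x ^ i * y ^ (n - 1 - i) - 1) := by
      rw [Finset.sum_sub_distrib]
      simp [hS]
    rw [this]
    rcases Finset.eq_empty_or_nonempty (range n) with h | h
    · simp [h]
    · obtain ⟨j, hj, hle⟩ := IsUltrametricDist.exists_norm_finset_sum_le_of_nonempty h
        (fun i => x ^ i * y ^ (n - 1 - i) - 1)
      exact lt_of_le_of_lt hle (hterm j hj)
  have hnn : ‖((n : ℤ) : ℤ_[p])‖ = 1 := by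
    refine le_antisymm (PadicInt.norm_le_one _) ?_
    by_contra h
    push_neg at h
    exact hn ((PadicInt.norm_int_lt_one_iff_dvd _).1 h)
  have hSnorm : ‖S‖ = 1 := by
    by_contra h
    have h1 : ‖S‖ < 1 := lt_of_le_of_ne (PadicInt.norm_le_one _) h
    have : ‖((n:ℤ) : ℤ_[p])‖ < 1 := by
      have : ((n:ℤ) : ℤ_[p]) = S - (S - (n : ℤ_[p])) := by push_cast; ring
      rw [this, sub_eq_add_neg]
      refine lt_of_le_of_lt (norm_add_le_max _ _) (max_lt h1 ?_)
      rwa [norm_neg]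
    linarith [hnn, this]
  rw [key, norm_mul]
  have : ((n:ℤ) : ℤ_[p]) = (n : ℤ_[p]) := by push_cast; ring
  rw [hSnorm, one_mul]


open PowerSeries Finset

namespace PlogAux

noncomputable def W (n : ℕ) : PowerSeries ℚ := (1 + X) ^ n - 1

lemma constantCoeff_W (n : ℕ) : constantCoeff (W n) = 0 := by
  simp [W]

lemma X_dvd_W (n : ℕ) : (X : ℚ⟦X⟧) ∣ W n := X_dvd_iff.2 (constantCoeff_W n)

lemma coeff_W_pow_eq_zero {n k m : ℕ} (hm : m < k) :
    coeff m ((W n) ^ k) = 0 :=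
  (X_pow_dvd_iff.1 (pow_dvd_pow_of_dvd (X_dvd_W n) k)) m hm

noncomputable def logCoeff (n m : ℕ) : ℚ :=
  ∑ k ∈ range m, ((-1) ^ k / (k + 1)) * coeff m ((W n) ^ (k + 1))

noncomputable def G (n M : ℕ) : ℚ⟦X⟧ :=
  ∑ k ∈ range M, C ((-1) ^ k / (k + 1) : ℚ) * (W n) ^ (k + 1)

lemma coeff_G (n : ℕ) {m M : ℕ} (hM : m ≤ M) :
    coeff m (G n M) = logCoeff n m := by
  rw [G, map_sum, logCoeff]
  refine (Finset.sum_subset (Finset.range_subset_range.2 hM) ?_).symm.trans ?_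
  · intro k _ hk'
    rw [coeff_C_mul, coeff_W_pow_eq_zero (by simp at hk'; omega), mul_zero]
  · exact Finset.sum_congr rfl fun k _ => (coeff_C_mul _ _ _)

lemma geom_tel (n M : ℕ) :
    (∑ k ∈ range M, C ((-1) ^ k : ℚ) * (W n) ^ k) * (1 + W n) = 1 - (- W n) ^ M := by
  have h := geom_sum_mul (- W n) M
  have e : ∑ k ∈ range M, C ((-1) ^ k : ℚ) * (W n) ^ k = ∑ k ∈ range M, (- W n) ^ k := by
    refine sum_congr rfl fun k _ => ?_
    rw [map_pow, map_neg, map_one, ← neg_one_mul (W n), mul_pow]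
  rw [e]
  linear_combination -h

lemma deriv_W (n : ℕ) : d⁄dX ℚ (W n) = C (n : ℚ) * (1 + X) ^ (n - 1) := by
  rw [W, map_sub, Derivation.leibniz_pow]
  simp [nsmul_eq_mul, smul_eq_mul]

lemma deriv_G (n M : ℕ) :
    d⁄dX ℚ (G n M) = (∑ k ∈ range M, C ((-1) ^ k : ℚ) * (W n) ^ k) * d⁄dX ℚ (W n) := by
  rw [G, map_sum, Finset.sum_mul]
  refine sum_congr rfl fun k _ => ?_
  rw [Derivation.leibniz, Derivation.leibniz_pow, derivative_C, smul_zero, add_zero,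
    smul_eq_mul, nsmul_eq_mul, smul_eq_mul, Nat.add_sub_cancel]
  have key : C ((-1) ^ k / (k + 1) : ℚ) * ((k + 1 : ℕ) : ℚ⟦X⟧) = C ((-1) ^ k : ℚ) := by
    rw [← map_natCast (C (R := ℚ)) (k + 1), ← map_mul]
    congr 1
    push_cast
    field_simp
  linear_combination (W n ^ k * d⁄dX ℚ (W n)) * key

noncomputable def F (n : ℕ) : ℚ⟦X⟧ := PowerSeries.mk (logCoeff n)

lemma one_add_W (n : ℕ) : 1 + W n = (1 + X : ℚ⟦X⟧) ^ n := by rw [W]; ring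

lemma keyA (n : ℕ) : (1 + X) ^ n * d⁄dX ℚ (F n) = C (n : ℚ) * (1 + X) ^ (n - 1) := by
  ext j
  have hG : (1 + X) ^ n * d⁄dX ℚ (G n (j + 1))
      = C (n : ℚ) * (1 + X) ^ (n - 1) - (- W n) ^ (j + 1) * (C (n : ℚ) * (1 + X) ^ (n - 1)) := by
    calc (1 + X) ^ n * d⁄dX ℚ (G n (j + 1))
        = ((∑ k ∈ range (j + 1), C ((-1) ^ k : ℚ) * (W n) ^ k) * (1 + W n)) * d⁄dX ℚ (W n) := by
          rw [deriv_G, one_add_W]; ring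
      _ = (1 - (- W n) ^ (j + 1)) * (C (n : ℚ) * (1 + X) ^ (n - 1)) := by
          rw [geom_tel, deriv_W]
      _ = _ := by ring
  have hcoeff_eq : coeff j ((1 + X) ^ n * d⁄dX ℚ (F n))
      = coeff j ((1 + X) ^ n * d⁄dX ℚ (G n (j + 1))) := by
    rw [coeff_mul, coeff_mul]
    refine Finset.sum_congr rfl fun ab hab => ?_
    have hab' : ab.1 + ab.2 = j := Finset.HasAntidiagonal.mem_antidiagonal.1 hab
    congr 1
    rw [coeff_derivative, coeff_derivative, F, coeff_mk, coeff_G _ (by omega : ab.2 + 1 ≤ j + 1)]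
  rw [hcoeff_eq, hG, map_sub]
  have hz : coeff j ((- W n) ^ (j + 1) * (C (n : ℚ) * (1 + X) ^ (n - 1))) = 0 := by
    refine X_pow_dvd_iff.1 ?_ j (lt_add_one j)
    exact Dvd.dvd.mul_right (pow_dvd_pow_of_dvd (dvd_neg.2 (X_dvd_W n)) _) _
  rw [hz, sub_zero]

lemma keyB (n : ℕ) : (1 + X) * d⁄dX ℚ (F n) = C (n : ℚ) := by
  have h2 : (1 + X : ℚ⟦X⟧) ^ (n - 1) ≠ 0 := by
    refine pow_ne_zero _ (fun h => ?_)
    simpa using congrArg (constantCoeff) h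
  have h1 : (1 + X : ℚ⟦X⟧) ^ (n - 1) * ((1 + X) * d⁄dX ℚ (F n) - C (n : ℚ)) = 0 := by
    cases n with
    | zero =>
        have h0 := keyA 0
        simp only [pow_zero, one_mul] at h0
        rw [mul_sub]
        simp [h0]
    | succ m =>
        have h0 := keyA (m + 1)
        have : ((m + 1 : ℕ) : ℕ) - 1 = m := by omega
        rw [this] at h0 ⊢
        rw [mul_sub]
        linear_combination h0
  rcases mul_eq_zero.1 h1 with h | h
  · exact absurd h h2
  · exact sub_eq_zero.1 h

lemma coeff_dF (n j : ℕ) : coeff j (d⁄dX ℚ (F n)) = logCoeff n (j + 1) * (j + 1) := by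
  rw [coeff_derivative, F, coeff_mk]

lemma logCoeff_one (n : ℕ) : logCoeff n 1 = n := by
  have h := congrArg (coeff 0) (keyB n)
  rw [add_mul, one_mul, map_add, coeff_dF, coeff_zero_X_mul, coeff_C] at h
  simpa using h

lemma logCoeff_rec (n j : ℕ) :
    logCoeff n (j + 2) * (j + 2) + logCoeff n (j + 1) * (j + 1) = 0 := by
  have h := congrArg (coeff (j + 1)) (keyB n)
  rw [add_mul, one_mul, map_add, coeff_dF, coeff_succ_X_mul, coeff_dF, coeff_C] at h
  simp only [Nat.succ_ne_zero, if_false] at h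
  push_cast at h ⊢
  linarith [h]

lemma logCoeff_eq (n m : ℕ) : logCoeff n (m + 1) = n * (-1) ^ m / (m + 1) := by
  induction m with
  | zero => simp [logCoeff_one]
  | succ j ih =>
      have h := logCoeff_rec n j
      rw [ih] at h
      have hj1 : ((j : ℚ) + 1) ≠ 0 := by positivity
      have hj2 : ((j : ℚ) + 2) ≠ 0 := by positivity
      field_simp at h ⊢
      push_cast
      linear_combination h

end PlogAux


open Finset

variable {p : ℕ} [Fact p.Prime]

lemma norm_natCast_inv_le (k : ℕ) : ((k : ℝ) + 1)⁻¹ ≤ ‖((k : ℚ_[p]) + 1)‖ := by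
  have hk : ((k + 1 : ℕ) : ℚ_[p]) ≠ 0 := by
    exact Nat.cast_ne_zero.2 (Nat.succ_ne_zero k)
  have hval := Padic.valuation_natCast (p := p) (k + 1)
  have hnorm := Padic.norm_eq_zpow_neg_valuation hk
  rw [hval] at hnorm
  have hdvd : p ^ padicValNat p (k + 1) ≤ k + 1 :=
    Nat.le_of_dvd (Nat.succ_pos k) pow_padicValNat_dvd
  have hp1 : (1 : ℝ) ≤ p := by exact_mod_cast (Fact.out : p.Prime).one_lt.le
  have : ((k : ℚ_[p]) + 1) = ((k + 1 : ℕ) : ℚ_[p]) := by push_cast; ring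
  rw [this, hnorm]
  rw [zpow_neg, zpow_natCast]
  rw [inv_le_inv₀ (by positivity) (by positivity)]
  calc ((p : ℝ)) ^ padicValNat p (k + 1) = ((p ^ padicValNat p (k + 1) : ℕ) : ℝ) := by push_cast; ring
    _ ≤ ((k + 1 : ℕ) : ℝ) := by exact_mod_cast hdvd
    _ = (k : ℝ) + 1 := by push_cast; ring

lemma norm_div_nat_le (z : ℚ_[p]) (k : ℕ) :
    ‖z / ((k : ℚ_[p]) + 1)‖ ≤ ((k : ℝ) + 1) * ‖z‖ := by
  rw [norm_div]
  have h := norm_natCast_inv_le (p := p) k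
  have hpos : (0 : ℝ) < (k : ℝ) + 1 := by positivity
  have hn : (0 : ℝ) < ‖((k : ℚ_[p]) + 1)‖ := lt_of_lt_of_le (by positivity) h
  rw [div_le_iff₀ hn]
  have : ((k : ℝ) + 1)⁻¹ * ((k:ℝ)+1) = 1 := inv_mul_cancel₀ (ne_of_gt hpos)
  calc ‖z‖ = ‖z‖ * (((k : ℝ) + 1)⁻¹ * ((k:ℝ)+1)) := by rw [this, mul_one]
    _ ≤ ‖z‖ * (‖((k : ℚ_[p]) + 1)‖ * ((k:ℝ)+1)) := by
        apply mul_le_mul_of_nonneg_left _ (norm_nonneg z)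
        exact mul_le_mul_of_nonneg_right h hpos.le
    _ = ((k : ℝ) + 1) * ‖z‖ * ‖((k : ℚ_[p]) + 1)‖ := by ring

namespace PlogAux

noncomputable def Az (n k m : ℕ) : ℤ := (((1 + Polynomial.X : Polynomial ℤ) ^ n - 1) ^ (k + 1)).coeff m

lemma map_Az (n k : ℕ) {S : Type*} [CommRing S] (f : ℤ →+* S) :
    Polynomial.map f (((1 + Polynomial.X : Polynomial ℤ) ^ n - 1) ^ (k + 1))
      = ((1 + Polynomial.X : Polynomial S) ^ n - 1) ^ (k + 1) := by
  simp [Polynomial.map_pow, Polynomial.map_sub, Polynomial.map_add, Polynomial.map_one]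

lemma coeff_W_eq_Az (n k m : ℕ) :
    PowerSeries.coeff m ((W n) ^ (k + 1)) = ((Az n k m : ℚ)) := by
  have h1 : ((((1 + Polynomial.X : Polynomial ℚ) ^ n - 1) ^ (k + 1) : Polynomial ℚ) : ℚ⟦X⟧)
      = (W n) ^ (k + 1) := by
    simp only [Polynomial.coe_pow, Polynomial.coe_sub, Polynomial.coe_add, Polynomial.coe_one,
      Polynomial.coe_X, W]
  rw [← h1, Polynomial.coeff_coe, ← map_Az n k (Int.castRingHom ℚ), Polynomial.coeff_map]
  rfl

lemma natDegree_le (n k : ℕ) :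
    (((1 + Polynomial.X : Polynomial ℤ) ^ n - 1) ^ (k + 1)).natDegree ≤ n * (k + 1) := by
  calc (((1 + Polynomial.X : Polynomial ℤ) ^ n - 1) ^ (k + 1)).natDegree
      ≤ (k + 1) * ((1 + Polynomial.X : Polynomial ℤ) ^ n - 1).natDegree :=
        Polynomial.natDegree_pow_le
    _ ≤ (k + 1) * n := by
        apply Nat.mul_le_mul_left
        refine le_trans (Polynomial.natDegree_sub_le _ _) ?_
        simp only [Polynomial.natDegree_one, max_le_iff]
        constructor
        · refine le_trans Polynomial.natDegree_pow_le ?_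
          have : (1 + Polynomial.X : Polynomial ℤ).natDegree ≤ 1 := by
            refine le_trans (Polynomial.natDegree_add_le _ _) ?_
            simp
          nlinarith [this]
        · exact Nat.zero_le n
    _ = n * (k + 1) := Nat.mul_comm _ _

lemma Az_eq_zero_lt {n k m : ℕ} (h : m < k + 1) : Az n k m = 0 := by
  have := coeff_W_eq_Az n k m
  rw [coeff_W_pow_eq_zero h] at this
  exact_mod_cast this.symm

lemma Az_eq_zero_gt {n k m : ℕ} (h : n * (k + 1) < m) : Az n k m = 0 :=
  Polynomial.coeff_eq_zero_of_natDegree_lt (lt_of_le_of_lt (natDegree_le n k) h)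

lemma eval_Az {p : ℕ} [Fact p.Prime] (n k : ℕ) (u : ℚ_[p]) :
    ((1 + u) ^ n - 1) ^ (k + 1)
      = ∑ m ∈ range (n * (k + 1) + 1), (Az n k m : ℚ_[p]) * u ^ m := by
  have hdeg : (((1 + Polynomial.X : Polynomial ℤ) ^ n - 1) ^ (k + 1)).natDegree
      < n * (k + 1) + 1 := Nat.lt_succ_of_le (natDegree_le n k)
  have h := Polynomial.eval₂_eq_sum_range' (Int.castRingHom ℚ_[p]) hdeg u
  calc ((1 + u) ^ n - 1) ^ (k + 1)
      = Polynomial.eval₂ (Int.castRingHom ℚ_[p]) u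
          (((1 + Polynomial.X : Polynomial ℤ) ^ n - 1) ^ (k + 1)) := by
        rw [← Polynomial.eval_map, map_Az]
        simp
    _ = ∑ i ∈ range (n * (k + 1) + 1),
          (Int.castRingHom ℚ_[p]) ((((1 + Polynomial.X : Polynomial ℤ) ^ n - 1) ^ (k + 1)).coeff i) * u ^ i := h
    _ = ∑ m ∈ range (n * (k + 1) + 1), (Az n k m : ℚ_[p]) * u ^ m := by
        refine Finset.sum_congr rfl fun m _ => ?_
        simp [Az]

end PlogAux

open PlogAux in
theorem plog_pow {p : ℕ} [Fact p.Prime] (n : ℕ) (u : ℚ_[p]) (hu : ‖u‖ ≤ (p : ℝ)⁻¹) :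
    plog ((1 + u) ^ n) = (n : ℚ_[p]) * plog (1 + u) := by
  classical
  have hp2 : (2 : ℝ) ≤ p := by exact_mod_cast (Fact.out : p.Prime).two_le
  set r : ℝ := (p : ℝ)⁻¹ with hrdef
  have hr0 : 0 ≤ r := by positivity
  have hr1 : r < 1 := by
    rw [hrdef, inv_lt_one_iff₀]
    right; linarith
  have hurm : ∀ m : ℕ, ‖u ^ m‖ ≤ r ^ m := fun m => by
    rw [norm_pow]; exact pow_le_pow_left₀ (norm_nonneg u) hu m
  set F2 : ℕ × ℕ → ℚ_[p] :=
    fun q => (-1) ^ q.1 * ((Az n q.1 q.2 : ℤ) : ℚ_[p]) * u ^ q.2 / ((q.1 : ℚ_[p]) + 1)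
    with hF2def
  -- norm bound
  have hF2norm : ∀ k m : ℕ,
      ‖F2 (k, m)‖ ≤ (if k + 1 ≤ m then ((m : ℝ) + 1) * r ^ m else 0) := by
    intro k m
    by_cases hkm : k + 1 ≤ m
    · rw [if_pos hkm]
      have h1 : ‖F2 (k, m)‖ ≤ ((k : ℝ) + 1) * ‖(-1) ^ k * ((Az n k m : ℤ) : ℚ_[p]) * u ^ m‖ :=
        norm_div_nat_le _ k
      have h2 : ‖(-1 : ℚ_[p]) ^ k * ((Az n k m : ℤ) : ℚ_[p]) * u ^ m‖ ≤ r ^ m := by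
        rw [norm_mul, norm_mul, norm_pow, norm_neg, norm_one, one_pow, one_mul]
        calc ‖((Az n k m : ℤ) : ℚ_[p])‖ * ‖u ^ m‖ ≤ 1 * r ^ m := by
              apply mul_le_mul (Padic.norm_int_le_one _) (hurm m) (norm_nonneg _)
                zero_le_one
          _ = r ^ m := one_mul _
      calc ‖F2 (k, m)‖ ≤ ((k : ℝ) + 1) * ‖(-1) ^ k * ((Az n k m : ℤ) : ℚ_[p]) * u ^ m‖ := h1
        _ ≤ ((k : ℝ) + 1) * r ^ m := by
            apply mul_le_mul_of_nonneg_left h2 (by positivity)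
        _ ≤ ((m : ℝ) + 1) * r ^ m := by
            apply mul_le_mul_of_nonneg_right _ (by positivity)
            have : (k : ℝ) + 1 ≤ (m : ℝ) := by exact_mod_cast hkm
            linarith
    · rw [if_neg hkm]
      have hz : Az n k m = 0 := Az_eq_zero_lt (by omega)
      simp [hF2def, hz]
  -- summability
  have hgsum : Summable (fun q : ℕ × ℕ =>
      (if q.2 + 1 ≤ q.1 then ((q.1 : ℝ) + 1) * r ^ q.1 else 0)) := by
    have hnonneg : (0 : (ℕ × ℕ) → ℝ) ≤ fun q =>
        (if q.2 + 1 ≤ q.1 then ((q.1 : ℝ) + 1) * r ^ q.1 else 0) := by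
      intro q; dsimp only; split <;> positivity
    rw [summable_prod_of_nonneg hnonneg]
    constructor
    · intro m
      apply summable_of_ne_finset_zero (s := Finset.range m)
      intro k hk
      rw [if_neg]
      simp only [Finset.mem_range, not_lt] at hk
      omega
    · have hB : Summable (fun m : ℕ => ((m : ℝ) + 1) ^ 2 * r ^ m) := by
        have s2 : Summable (fun m : ℕ => (m : ℝ) ^ 2 * r ^ m) := by
          simpa using summable_pow_mul_geometric_of_norm_lt_one 2
            (by rwa [Real.norm_of_nonneg hr0] : ‖r‖ < 1)
        have s1 : Summable (fun m : ℕ => (m : ℝ) ^ 1 * r ^ m) := by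
          simpa using summable_pow_mul_geometric_of_norm_lt_one 1
            (by rwa [Real.norm_of_nonneg hr0] : ‖r‖ < 1)
        have s0 : Summable (fun m : ℕ => r ^ m) := summable_geometric_of_lt_one hr0 hr1
        have := (s2.add ((s1.mul_left 2).add s0))
        apply this.congr
        intro m
        push_cast
        ring
      apply Summable.of_nonneg_of_le _ _ hB
      · intro m
        apply tsum_nonneg
        intro k; split <;> positivity
      · intro m
        have hts : ∑' k : ℕ, (if k + 1 ≤ m then ((m : ℝ) + 1) * r ^ m else 0)
            = ∑ k ∈ Finset.range m, (if k + 1 ≤ m then ((m : ℝ) + 1) * r ^ m else 0) := by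
          apply tsum_eq_sum
          intro k hk
          rw [if_neg]
          simp only [Finset.mem_range, not_lt] at hk
          omega
        rw [hts]
        calc ∑ k ∈ Finset.range m, (if k + 1 ≤ m then ((m : ℝ) + 1) * r ^ m else 0)
            ≤ ∑ k ∈ Finset.range m, ((m : ℝ) + 1) * r ^ m := by
              apply Finset.sum_le_sum
              intro k _
              split
              · exact le_refl _
              · positivity
          _ = (m : ℝ) * (((m : ℝ) + 1) * r ^ m) := by
              rw [Finset.sum_const, Finset.card_range, nsmul_eq_mul]
          _ ≤ ((m : ℝ) + 1) ^ 2 * r ^ m := by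
              have h1 : (0:ℝ) ≤ r ^ m := by positivity
              nlinarith [Nat.cast_nonneg (α := ℝ) m]
  have hnormsum : Summable (fun q : ℕ × ℕ => ‖F2 q‖) := by
    apply Summable.of_nonneg_of_le (fun q => norm_nonneg _) _ (hgsum.prod_symm)
    intro q
    exact hF2norm q.1 q.2
  have hF2sum : Summable F2 := hnormsum.of_norm
  -- step E1
  have E1 : plog ((1 + u) ^ n) = ∑' k, ∑' m, F2 (k, m) := by
    rw [plog]
    refine tsum_congr fun k => ?_
    have hfin : ∀ m ∉ Finset.range (n * (k + 1) + 1), F2 (k, m) = 0 := by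
      intro m hm
      simp only [Finset.mem_range, not_lt] at hm
      have hz : Az n k m = 0 := Az_eq_zero_gt (by omega)
      simp [hF2def, hz]
    rw [tsum_eq_sum hfin, eval_Az n k u, Finset.mul_sum, Finset.sum_div]
    exact Finset.sum_congr rfl fun m _ => by simp only [hF2def]; ring
  -- step E2
  have E2 : ∑' k, ∑' m, F2 (k, m) = ∑' m, ∑' k, F2 (k, m) :=
    (Summable.tsum_comm (f := fun k m => F2 (k, m)) hF2sum).symm
  -- step E3
  have E3 : ∀ m, ∑' k, F2 (k, m) = ((logCoeff n m : ℚ) : ℚ_[p]) * u ^ m := by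
    intro m
    have hfin : ∀ k ∉ Finset.range m, F2 (k, m) = 0 := by
      intro k hk
      simp only [Finset.mem_range, not_lt] at hk
      have hz : Az n k m = 0 := Az_eq_zero_lt (by omega)
      simp [hF2def, hz]
    rw [tsum_eq_sum hfin]
    simp only [logCoeff, coeff_W_eq_Az]
    push_cast
    rw [Finset.sum_mul]
    refine Finset.sum_congr rfl fun k _ => ?_
    simp only [hF2def]
    ring
  -- summability of the coefficient series
  have hJ : Summable (fun m => ((logCoeff n m : ℚ) : ℚ_[p]) * u ^ m) := by
    have := (hF2sum.prod_symm).prod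
    apply this.congr
    intro m
    rw [← E3 m]
    rfl
  -- final computation
  rw [E1, E2, tsum_congr E3, Summable.tsum_eq_zero_add hJ]
  have hJ0 : ((logCoeff n 0 : ℚ) : ℚ_[p]) * u ^ 0 = 0 := by
    simp [logCoeff]
  rw [hJ0, zero_add]
  have hJs : ∀ m : ℕ, ((logCoeff n (m + 1) : ℚ) : ℚ_[p]) * u ^ (m + 1)
      = (n : ℚ_[p]) * ((-1) ^ m * u ^ (m + 1) / ((m : ℚ_[p]) + 1)) := by
    intro m
    rw [logCoeff_eq]
    push_cast
    ring
  rw [tsum_congr hJs, tsum_mul_left]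
  congr 1
  rw [plog]
  congr 1
  funext k
  rw [add_sub_cancel_left]

theorem stmt_19 (p : ℕ) [Fact p.Prime] (hp : p ≠ 2) (l : ℕ) (hl : 1 ≤ l)
    (n : ℕ) (hn : n.Coprime p)
    [MeasurableSpace ℤ_[p]] [BorelSpace ℤ_[p]]
    (ψ : {x : ℤ_[p] // ‖x - 1‖ = (p : ℝ) ^ (-(l : ℤ))} →
         {x : ℤ_[p] // ‖x - 1‖ = (p : ℝ) ^ (-(l : ℤ))})
    (hψ : ∀ x : {x : ℤ_[p] // ‖x - 1‖ = (p : ℝ) ^ (-(l : ℤ))},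
      (ψ x : ℤ_[p]) = (x : ℤ_[p]) ^ n)
    (μ : Measure {x : ℤ_[p] // ‖x - 1‖ = (p : ℝ) ^ (-(l : ℤ))})
    (hprob : IsProbabilityMeasure μ)
    (hHaar : ∀ k : ℕ, 1 ≤ k → ∀ a : {x : ℤ_[p] // ‖x - 1‖ = (p : ℝ) ^ (-(l : ℤ))},
      μ {x | dist x a ≤ (p : ℝ) ^ (-(l + k : ℤ))}
        = (((p - 1) * p ^ (k - 1) : ℕ) : ENNReal)⁻¹)
    (herg : Ergodic ψ μ) :
    ¬ Ergodic (Prod.map ψ ψ) (μ.prod μ) ∧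
    (∀ x y : {x : ℤ_[p] // ‖x - 1‖ = (p : ℝ) ^ (-(l : ℤ))},
      plog (((x : ℤ_[p]) : ℚ_[p]) ^ n) / plog (((y : ℤ_[p]) : ℚ_[p]) ^ n)
        = plog ((x : ℤ_[p]) : ℚ_[p]) / plog ((y : ℤ_[p]) : ℚ_[p])) := by
  have pp : p.Prime := Fact.out
  have hp1R : (1 : ℝ) < p := by exact_mod_cast pp.one_lt
  have hn0 : n ≠ 0 := by
    intro h
    rw [h] at hn
    have : p = 1 := by simpa [Nat.Coprime] using hn
    exact pp.one_lt.ne' this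
  have hpn : ¬ (p : ℤ) ∣ (n : ℤ) := by
    intro hd
    have hd' : p ∣ n := Int.natCast_dvd_natCast.mp hd
    have : p ∣ 1 := hn ▸ Nat.dvd_gcd hd' dvd_rfl
    exact pp.one_lt.ne' (Nat.dvd_one.mp this)
  -- norm facts on the sphere
  have hsphere_lt : ∀ x : {x : ℤ_[p] // ‖x - 1‖ = (p : ℝ) ^ (-(l : ℤ))},
      ‖(x : ℤ_[p]) - 1‖ < 1 := by
    intro x
    rw [x.2]
    calc (p : ℝ) ^ (-(l : ℤ)) ≤ (p : ℝ) ^ (-1 : ℤ) := by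
          apply zpow_le_zpow_right₀ hp1R.le
          omega
      _ < 1 := by
          rw [zpow_neg_one]
          rw [inv_lt_one_iff₀]
          right; exact hp1R
  -- the key norm preservation
  have hkey : ∀ x y : {x : ℤ_[p] // ‖x - 1‖ = (p : ℝ) ^ (-(l : ℤ))},
      dist (ψ x) (ψ y) = dist x y := by
    intro x y
    rw [Subtype.dist_eq (ψ x) (ψ y), Subtype.dist_eq x y, dist_eq_norm, dist_eq_norm, hψ x, hψ y]
    exact norm_pow_sub_pow _ _ (hsphere_lt x) (hsphere_lt y) n hpn
  constructor
  · intro h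
    haveI : BorelSpace {x : ℤ_[p] // ‖x - 1‖ = (p : ℝ) ^ (-(l : ℤ))} :=
      Subtype.borelSpace {x : ℤ_[p] | ‖x - 1‖ = (p : ℝ) ^ (-(l : ℤ))}
    set c : ℝ := (p : ℝ) ^ (-((l : ℤ) + ((1 : ℕ) : ℤ))) with hc
    set A : Set ({x : ℤ_[p] // ‖x - 1‖ = (p : ℝ) ^ (-(l : ℤ))} ×
        {x : ℤ_[p] // ‖x - 1‖ = (p : ℝ) ^ (-(l : ℤ))}) :=
      {z | dist z.1 z.2 ≤ c} with hA
    have hmeas : MeasurableSet A := by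
      have hcont : Continuous fun z : {x : ℤ_[p] // ‖x - 1‖ = (p : ℝ) ^ (-(l : ℤ))} ×
          {x : ℤ_[p] // ‖x - 1‖ = (p : ℝ) ^ (-(l : ℤ))} => dist z.1 z.2 :=
        continuous_fst.dist continuous_snd
      exact hcont.measurable measurableSet_Iic
    have hinv : Prod.map ψ ψ ⁻¹' A = A := by
      ext z
      simp only [hA, Set.mem_preimage, Set.mem_setOf_eq, Prod.map_fst, Prod.map_snd]
      rw [hkey z.1 z.2]
    have hval : (μ.prod μ) A = (((p - 1) : ℕ) : ENNReal)⁻¹ := by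
      rw [Measure.prod_apply hmeas]
      have hsec : ∀ a : {x : ℤ_[p] // ‖x - 1‖ = (p : ℝ) ^ (-(l : ℤ))},
          μ (Prod.mk a ⁻¹' A) = (((p - 1) * p ^ (1 - 1) : ℕ) : ENNReal)⁻¹ := by
        intro a
        have he : Prod.mk a ⁻¹' A = {x | dist x a ≤ c} := by
          ext y
          simp only [hA, Set.mem_preimage, Set.mem_setOf_eq, dist_comm]
        rw [he, hc]
        exact hHaar 1 le_rfl a
      rw [lintegral_congr hsec, lintegral_const, measure_univ, mul_one]
      norm_num
    rcases (h.toPreErgodic.ae_empty_or_univ hmeas hinv) with he | he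
    · have h0 : (μ.prod μ) A = 0 := by
        rw [measure_congr he]; simp
      rw [hval] at h0
      have : ((p - 1 : ℕ) : ENNReal) ≠ ⊤ := ENNReal.natCast_ne_top _
      exact (ENNReal.inv_ne_zero.2 this) h0
    · have h1 : (μ.prod μ) A = 1 := by
        rw [measure_congr he]
        simp
      rw [hval] at h1
      have hpm : (p - 1 : ℕ) = 1 := by
        exact_mod_cast ENNReal.inv_eq_one.mp h1
      have : p = 2 := by omega
      exact hp this
  · intro x y
    have hx : plog (((x : ℤ_[p]) : ℚ_[p]) ^ n) = (n : ℚ_[p]) * plog ((x : ℤ_[p]) : ℚ_[p]) := by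
      have hu : ‖((x : ℤ_[p]) : ℚ_[p]) - 1‖ ≤ (p : ℝ)⁻¹ := by
        have : ((x : ℤ_[p]) : ℚ_[p]) - 1 = (((x : ℤ_[p]) - 1 : ℤ_[p]) : ℚ_[p]) := by push_cast; ring
        rw [this, ← PadicInt.norm_def, x.2]
        calc (p : ℝ) ^ (-(l : ℤ)) ≤ (p : ℝ) ^ (-1 : ℤ) := by
              apply zpow_le_zpow_right₀ hp1R.le
              omega
          _ = (p : ℝ)⁻¹ := zpow_neg_one _
      have := plog_pow n (((x : ℤ_[p]) : ℚ_[p]) - 1) hu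
      simpa using this
    have hy : plog (((y : ℤ_[p]) : ℚ_[p]) ^ n) = (n : ℚ_[p]) * plog ((y : ℤ_[p]) : ℚ_[p]) := by
      have hu : ‖((y : ℤ_[p]) : ℚ_[p]) - 1‖ ≤ (p : ℝ)⁻¹ := by
        have : ((y : ℤ_[p]) : ℚ_[p]) - 1 = (((y : ℤ_[p]) - 1 : ℤ_[p]) : ℚ_[p]) := by push_cast; ring
        rw [this, ← PadicInt.norm_def, y.2]
        calc (p : ℝ) ^ (-(l : ℤ)) ≤ (p : ℝ) ^ (-1 : ℤ) := by
              apply zpow_le_zpow_right₀ hp1R.le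
              omega
          _ = (p : ℝ)⁻¹ := zpow_neg_one _
      have := plog_pow n (((y : ℤ_[p]) : ℚ_[p]) - 1) hu
      simpa using this
    rw [hx, hy]
    apply mul_div_mul_left
    exact_mod_cast hn0
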